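/- If a graph G on n vertices admits a K_{r+1}-WORM coloring, then G has at most ex(n, K_{r²+1}) edges; conversely the balanced complete r²-partite Turán graph on n vertices admits a K_{r+1}-WORM coloring, so wex(n, K_{r+1}) = ex(n, K_{r²+1}). -/

import Mathlib

open SimpleGraph Set Function

lemma cliqueFree_iff_not_exists' {n k : ℕ} (G : SimpleGraph (Fin n)) :
    G.CliqueFree k ↔ ¬∃ f : Fin k → Fin n, Injective f ∧ ∀ a b, a ≠ b → G.Adj (f a) (f b) := by
  constructor
  · rintro h ⟨f, hinj, hadj⟩
    refine not_cliqueFree_of_top_embedding (SimpleGraph.Embedding.isContained (⟨⟨f, hinj⟩, ?_⟩ : completeGraph (Fin k) ↪g G)) h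
    intro a b
    simp only [top_adj, Embedding.coeFn_mk]
    exact ⟨fun h' hab => by subst hab; exact h'.ne rfl, fun hab => hadj a b hab⟩
  · intro h
    by_contra hncf
    obtain e := topEmbeddingOfNotCliqueFree hncf
    exact h ⟨e, e.injective, fun a b hab => e.map_rel_iff.2 (by simpa using hab)⟩

lemma worm_no_big_clique {n r : ℕ} (G : SimpleGraph (Fin n)) (c : Fin n → ℕ)
    (hmono : ¬∃ f : Fin (r + 1) → Fin n, Injective f ∧
        (∀ a b, a ≠ b → G.Adj (f a) (f b)) ∧ ∀ a b, c (f a) = c (f b))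
    (hrain : ¬∃ f : Fin (r + 1) → Fin n, Injective f ∧
        (∀ a b, a ≠ b → G.Adj (f a) (f b)) ∧ Injective (c ∘ f)) :
    ¬∃ f : Fin (r ^ 2 + 1) → Fin n, Injective f ∧ ∀ a b, a ≠ b → G.Adj (f a) (f b) := by
  rintro ⟨f, hinj, hadj⟩
  set s : Finset ℕ := Finset.image (fun a => c (f a)) Finset.univ with hs
  by_cases hcard : r + 1 ≤ s.card
  · -- rainbow clique exists
    obtain ⟨t, hts, htc⟩ := Finset.exists_subset_card_eq hcard
    let e := t.orderIsoOfFin htc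
    have hmem : ∀ i : Fin (r + 1), (e i : ℕ) ∈ s := fun i => hts (e i).2
    have hex : ∀ i : Fin (r + 1), ∃ a : Fin (r ^ 2 + 1), c (f a) = (e i : ℕ) := by
      intro i
      obtain ⟨a, _, ha⟩ := Finset.mem_image.1 (hmem i)
      exact ⟨a, ha⟩
    choose g hg using hex
    have hginj : Injective g := by
      intro a b hab
      have : (e a : ℕ) = (e b : ℕ) := by rw [← hg a, ← hg b, hab]
      exact e.injective (Subtype.ext this)
    refine hrain ⟨f ∘ g, hinj.comp hginj, ?_, ?_⟩
    · intro a b hab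
      exact hadj _ _ (fun h => hab (hginj h))
    · intro a b hab
      have : (e a : ℕ) = (e b : ℕ) := by rw [← hg a, ← hg b]; exact hab
      exact e.injective (Subtype.ext this)
  · -- monochromatic clique exists
    push_neg at hcard
    have hlt : s.card * r < (Finset.univ : Finset (Fin (r ^ 2 + 1))).card := by
      have : s.card * r ≤ r * r := Nat.mul_le_mul_right r (Nat.lt_succ_iff.1 hcard)
      simp only [Finset.card_univ, Fintype.card_fin]
      calc s.card * r ≤ r * r := this
        _ < r ^ 2 + 1 := by nlinarith
    obtain ⟨y, _, hfib⟩ := Finset.exists_lt_card_fiber_of_mul_lt_card_of_maps_to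
      (fun a _ => Finset.mem_image_of_mem (fun a => c (f a)) (Finset.mem_univ a)) hlt
    obtain ⟨t, hts, htc⟩ := Finset.exists_subset_card_eq (Nat.succ_le_of_lt hfib)
    let e := t.orderIsoOfFin htc
    have hginj : Injective (fun i : Fin (r + 1) => (e i : Fin (r ^ 2 + 1))) := by
      intro a b hab
      exact e.injective (Subtype.ext hab)
    have hcol : ∀ i : Fin (r + 1), c (f (e i : Fin (r ^ 2 + 1))) = y := by
      intro i
      have := hts (e i).2
      simp only [Finset.mem_filter] at this
      exact this.2
    refine hmono ⟨fun i => f (e i : Fin (r ^ 2 + 1)), hinj.comp hginj, ?_, ?_⟩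
    · intro a b hab
      exact hadj _ _ (fun h => hab (hginj h))
    · intro a b
      rw [hcol a, hcol b]

/-- `wex(n, K_{r+1}) = ex(n, K_{r²+1})`: the maximum number of edges of an `n`-vertex
graph admitting a `K_{r+1}`-WORM coloring (no monochromatic and no rainbow `K_{r+1}`)
equals the Turán number of `K_{r²+1}`. -/
theorem worm_clique_eq_ex (r n : ℕ) (hr : 1 ≤ r) (exK : ℕ)
    (hex : IsGreatest {m : ℕ | ∃ G : SimpleGraph (Fin n),
      (¬∃ f : Fin (r ^ 2 + 1) → Fin n, Injective f ∧ ∀ a b, a ≠ b → G.Adj (f a) (f b)) ∧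
      m = G.edgeSet.ncard} exK) :
    IsGreatest {m : ℕ | ∃ (G : SimpleGraph (Fin n)) (c : Fin n → ℕ),
      (¬∃ f : Fin (r + 1) → Fin n, Injective f ∧
        (∀ a b, a ≠ b → G.Adj (f a) (f b)) ∧ ∀ a b, c (f a) = c (f b)) ∧
      (¬∃ f : Fin (r + 1) → Fin n, Injective f ∧
        (∀ a b, a ≠ b → G.Adj (f a) (f b)) ∧ Injective (c ∘ f)) ∧
      m = G.edgeSet.ncard} exK := by
  have hr2 : 0 < r ^ 2 := by positivity
  set T : SimpleGraph (Fin n) := turanGraph n (r ^ 2) with hT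
  have hTfree : T.CliqueFree (r ^ 2 + 1) := turanGraph_cliqueFree hr2
  have hncard : ∀ (G : SimpleGraph (Fin n)) [DecidableRel G.Adj],
      G.edgeSet.ncard = G.edgeFinset.card := by
    intro G _
    rw [← Set.ncard_coe_finset, coe_edgeFinset]
  -- T attains exK
  have hTle : T.edgeSet.ncard ≤ exK :=
    hex.2 ⟨T, (cliqueFree_iff_not_exists' T).1 hTfree, rfl⟩
  have hTge : exK ≤ T.edgeSet.ncard := by
    obtain ⟨G₀, hG₀free, hG₀card⟩ := hex.1
    classical
    have hG₀cf : G₀.CliqueFree (r ^ 2 + 1) := (cliqueFree_iff_not_exists' G₀).2 hG₀free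
    have := (isTuranMaximal_turanGraph (n := n) hr2).2 (G' := G₀) hG₀cf
    rw [hG₀card, hncard G₀, hncard T]
    exact this
  have hTcard : T.edgeSet.ncard = exK := le_antisymm hTle hTge
  constructor
  · -- membership: T with coloring v ↦ (v % r²) % r
    refine ⟨T, fun v => ((v : ℕ) % r ^ 2) % r, ?_, ?_, hTcard.symm⟩
    · -- no monochromatic K_{r+1}
      rintro ⟨f, hinj, hadj, hcol⟩
      have hadjn : ∀ a b, a ≠ b → (f a : ℕ) % r ^ 2 ≠ (f b : ℕ) % r ^ 2 := by
        intro a b hab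
        have := hadj a b hab
        simp only [hT, turanGraph] at this
        exact this
      have hglt : ∀ a : Fin (r + 1), ((f a : ℕ) % r ^ 2) / r < r := by
        intro a
        rw [Nat.div_lt_iff_lt_mul hr]
        calc (f a : ℕ) % r ^ 2 < r ^ 2 := Nat.mod_lt _ hr2
          _ = r * r := sq r
      have hginj : Injective (fun a : Fin (r + 1) =>
          (⟨((f a : ℕ) % r ^ 2) / r, hglt a⟩ : Fin r)) := by
        intro a b hab
        by_contra hne
        apply hadjn a b hne
        have h1 : ((f a : ℕ) % r ^ 2) / r = ((f b : ℕ) % r ^ 2) / r :=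
          congrArg Fin.val hab
        have h2 : ((f a : ℕ) % r ^ 2) % r = ((f b : ℕ) % r ^ 2) % r := hcol a b
        conv_lhs => rw [← Nat.div_add_mod ((f a : ℕ) % r ^ 2) r]
        rw [h1, h2, Nat.div_add_mod]
      have := Fintype.card_le_of_injective _ hginj
      simp only [Fintype.card_fin] at this
      omega
    · -- no rainbow K_{r+1}
      rintro ⟨f, hinj, hadj, hcinj⟩
      have hglt : ∀ a : Fin (r + 1), ((f a : ℕ) % r ^ 2) % r < r :=
        fun a => Nat.mod_lt _ hr
      have hginj : Injective (fun a : Fin (r + 1) =>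
          (⟨((f a : ℕ) % r ^ 2) % r, hglt a⟩ : Fin r)) := by
        intro a b hab
        exact hcinj (by simpa [Function.comp] using congrArg Fin.val hab)
      have := Fintype.card_le_of_injective _ hginj
      simp only [Fintype.card_fin] at this
      omega
  · -- upper bound
    rintro m ⟨G, c, hmono, hrain, rfl⟩
    exact hex.2 ⟨G, worm_no_big_clique G c hmono hrain, rfl⟩
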